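/- For every real constant ξ > 0, the function y(x) = x · 2^(ξ/x) − x is strictly decreasing on the interval (0, ∞); that is, for all 0 < x₁ < x₂ one has x₁ · 2^(ξ/x₁) − x₁ > x₂ · 2^(ξ/x₂) − x₂. -/

import Mathlib

lemma aux_deriv (ξ : ℝ) (hξ : 0 < ξ) {x : ℝ} (hx : 0 < x) :
    HasDerivAt (fun x : ℝ => x * Real.exp (Real.log 2 * (ξ / x)) - x)
      (Real.exp (Real.log 2 * (ξ / x)) +
        x * (Real.exp (Real.log 2 * (ξ / x)) * (Real.log 2 * (-ξ / x ^ 2))) - 1) x := by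
  have h1 : HasDerivAt (fun x : ℝ => ξ / x) (-ξ / x ^ 2) x := by
    have := (hasDerivAt_inv hx.ne').const_mul ξ
    rw [show -ξ / x ^ 2 = ξ * -(x ^ 2)⁻¹ by ring]
    exact this
  have h2 := (h1.const_mul (Real.log 2)).exp
  have h3 := (hasDerivAt_id x).mul h2
  have h4 := h3.sub (hasDerivAt_id x)
  refine h4.congr_deriv ?_
  simp only [id]
  ring

lemma aux_neg (ξ : ℝ) (hξ : 0 < ξ) {x : ℝ} (hx : 0 < x) :
    Real.exp (Real.log 2 * (ξ / x)) +
        x * (Real.exp (Real.log 2 * (ξ / x)) * (Real.log 2 * (-ξ / x ^ 2))) - 1 < 0 := by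
  set v := Real.log 2 * (ξ / x) with hv
  have hl2 : 0 < Real.log 2 := Real.log_pos (by norm_num)
  have hvpos : 0 < v := by positivity
  have hxv : x * (Real.log 2 * (-ξ / x ^ 2)) = -v := by
    rw [hv]; field_simp
  have key : Real.exp v * (1 - v) < 1 := by
    have h := Real.add_one_lt_exp (x := -v) (by linarith)
    have : 1 - v < Real.exp (-v) := by linarith
    calc Real.exp v * (1 - v) < Real.exp v * Real.exp (-v) := by
          exact mul_lt_mul_of_pos_left this (Real.exp_pos v)
      _ = 1 := by rw [← Real.exp_add]; simp
  nlinarith [Real.exp_pos v]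

theorem stmt_8 (ξ : ℝ) (hξ : 0 < ξ) :
    ∀ x₁ x₂ : ℝ, 0 < x₁ → x₁ < x₂ →
      x₁ * (2 : ℝ) ^ (ξ / x₁) - x₁ > x₂ * (2 : ℝ) ^ (ξ / x₂) - x₂ := by
  have anti : StrictAntiOn (fun x : ℝ => x * Real.exp (Real.log 2 * (ξ / x)) - x)
      (Set.Ioi 0) := by
    apply strictAntiOn_of_deriv_neg (convex_Ioi 0)
    · apply ContinuousOn.sub _ continuousOn_id
      apply ContinuousOn.mul continuousOn_id
      apply Real.continuous_exp.comp_continuousOn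
      apply ContinuousOn.mul continuousOn_const
      exact ContinuousOn.div continuousOn_const continuousOn_id fun x hx => ne_of_gt hx
    · intro x hx
      rw [interior_Ioi] at hx
      rw [(aux_deriv ξ hξ hx).deriv]
      exact aux_neg ξ hξ hx
  intro x₁ x₂ h1 h12
  have := anti (Set.mem_Ioi.2 h1) (Set.mem_Ioi.2 (h1.trans h12)) h12
  simp only at this
  rw [show (2:ℝ) ^ (ξ / x₁) = Real.exp (Real.log 2 * (ξ / x₁)) from
      Real.rpow_def_of_pos (by norm_num) _,
    show (2:ℝ) ^ (ξ / x₂) = Real.exp (Real.log 2 * (ξ / x₂)) from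
      Real.rpow_def_of_pos (by norm_num) _]
  exact this
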